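/- For all reals α ≥ 1 and c ≥ 1, one has αc/(1 + (α−1)c) ≤ c^(1/α). -/

import Mathlib

/-- For all reals `α ≥ 1` and `c ≥ 1`, one has `αc/(1 + (α−1)c) ≤ c^(1/α)`
(real power). -/
theorem stmt9 (α c : ℝ) (hα : 1 ≤ α) (hc : 1 ≤ c) :
    α * c / (1 + (α - 1) * c) ≤ c ^ (1 / α) := by
  have hα0 : (0:ℝ) < α := lt_of_lt_of_le one_pos hα
  have hc0 : (0:ℝ) < c := lt_of_lt_of_le one_pos hc
  have hD : (0:ℝ) < 1 + (α - 1) * c := by nlinarith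
  have hw : 1/α + (α-1)/α = 1 := by field_simp; ring
  have h := Real.geom_mean_le_arith_mean2_weighted
    (by positivity : (0:ℝ) ≤ 1/α) (by apply div_nonneg <;> linarith)
    zero_le_one hc0.le hw
  rw [Real.one_rpow, one_mul, mul_one] at h
  have hcr : c ^ ((α-1)/α) = c / c ^ (1/α) := by
    have : (α-1)/α = 1 - 1/α := by field_simp
    rw [this, Real.rpow_sub hc0, Real.rpow_one]
  rw [hcr, div_le_iff₀ (by positivity)] at h
  have hs : (1/α + (α-1)/α * c) = (1 + (α-1)*c)/α := by field_simp
  rw [hs, div_mul_eq_mul_div, le_div_iff₀ hα0] at h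
  rw [div_le_iff₀ hD]
  nlinarith [h]
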